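/- For n ≥ 3 and u ≥ n, the number of nondecreasing sequences of length n over [0,u), namely C(u+n−1, n), is at most u^n / 2^(⌊n/3⌋·⌊log2(n/3)⌋) · 2^(O(log u)); in particular log2 C(u+n−1, n) ≤ n·log2 u − ⌊n/3⌋·⌊log2(n/3)⌋ + O(log u). -/
import Mathlib


/-- Counting feasibility for Lemma 1: the number of nondecreasing sequences of
length `n` over `[0,u)`, namely `C(u+n−1, n)`, satisfies
`log₂ C(u+n−1, n) ≤ n·log₂ u − ⌊n/3⌋·⌊log₂(n/3)⌋ + O(log u)`. -/
theorem stmt_3 :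
    ∃ C : ℝ, 0 < C ∧ ∀ n u : ℕ, 3 ≤ n → n ≤ u →
      Real.logb 2 ((u + n - 1).choose n) ≤
        n * Real.logb 2 u - ((n / 3) * Nat.log 2 (n / 3) : ℕ) + C * Real.logb 2 u := by
  refine ⟨100, by norm_num, ?_⟩
  intro n u hn hu
  set m := n / 3 with hm
  have hm1 : 1 ≤ m := by omega
  have h3m : 3 * m ≤ n := by omega
  have hn3m : n ≤ 3 * m + 2 := by omega
  have hu2 : 2 ≤ u := by omega
  -- Key natural-number inequality
  have hfact : (m + 1) ^ (2 * m) ≤ Nat.factorial n := by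
    calc (m + 1) ^ (2 * m) ≤ (m + 1) ^ (n - m) :=
          Nat.pow_le_pow_right (by omega) (by omega)
      _ ≤ (m + 1).ascFactorial (n - m) := Nat.pow_succ_le_ascFactorial _ _
      _ ≤ Nat.factorial m * (m + 1).ascFactorial (n - m) := Nat.le_mul_of_pos_left _ m.factorial_pos
      _ = Nat.factorial (m + (n - m)) := Nat.factorial_mul_ascFactorial m (n - m)
      _ = Nat.factorial n := by congr 1; omega
  have key : (u + n - 1).choose n * (m + 1) ^ (2 * m) ≤ (2 * u) ^ n := by
    calc (u + n - 1).choose n * (m + 1) ^ (2 * m)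
        ≤ (u + n - 1).choose n * Nat.factorial n := Nat.mul_le_mul_left _ hfact
      _ = Nat.factorial n * (u + n - 1).choose n := Nat.mul_comm _ _
      _ = u.ascFactorial n := (Nat.ascFactorial_eq_factorial_mul_choose' u n).symm
      _ = ((u - 1) + 1).ascFactorial n := by congr 1; omega
      _ ≤ ((u - 1) + n) ^ n := Nat.ascFactorial_le_pow_add _ _
      _ ≤ (2 * u) ^ n := Nat.pow_le_pow_left (by omega) _
  have hc : 0 < (u + n - 1).choose n := Nat.choose_pos (by omega)
  -- move to the reals
  have hcR : (0:ℝ) < ((u + n - 1).choose n : ℝ) := by exact_mod_cast hc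
  have hmR : (0:ℝ) < ((m:ℝ) + 1) ^ (2 * m) := by positivity
  have keyR : ((u + n - 1).choose n : ℝ) * ((m:ℝ) + 1) ^ (2 * m) ≤ ((2:ℝ) * u) ^ n := by
    have := key
    push_cast at this ⊢
    exact_mod_cast this
  have hb : (1:ℝ) < 2 := one_lt_two
  have hlog := (Real.logb_le_logb hb (by positivity) (by positivity)).mpr keyR
  have hu0 : (0:ℝ) < (u:ℝ) := by positivity
  rw [Real.logb_mul (ne_of_gt hcR) (ne_of_gt hmR), Real.logb_pow, Real.logb_pow,
    Real.logb_mul (by norm_num) (ne_of_gt hu0), Real.logb_self_eq_one hb] at hlog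
  -- hlog : logb 2 c + (2m) * logb 2 (m+1) ≤ n * (1 + logb 2 u)
  have hlu : (1:ℝ) ≤ Real.logb 2 u := by
    have : Real.logb 2 2 ≤ Real.logb 2 u :=
      Real.logb_le_logb_of_le hb (by norm_num) (by exact_mod_cast hu2)
    rwa [Real.logb_self_eq_one hb] at this
  have hA : (Nat.log 2 m : ℝ) ≤ Real.logb 2 ((m:ℝ) + 1) := by
    calc (Nat.log 2 m : ℝ) ≤ Real.logb 2 m := Real.natLog_le_logb m 2
      _ ≤ Real.logb 2 ((m:ℝ) + 1) :=
        Real.logb_le_logb_of_le hb (by exact_mod_cast hm1) (by linarith)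
  have hB : (n:ℝ) ≤ (m:ℝ) * Real.logb 2 ((m:ℝ) + 1) + 100 * Real.logb 2 u := by
    have hnn : (0:ℝ) ≤ Real.logb 2 ((m:ℝ) + 1) := Real.logb_nonneg hb (by
      have : (1:ℝ) ≤ (m:ℝ) := by exact_mod_cast hm1
      linarith)
    by_cases hcase : n ≤ 100
    · have h1 : (n:ℝ) ≤ 100 := by exact_mod_cast hcase
      have h2 : (0:ℝ) ≤ (m:ℝ) * Real.logb 2 ((m:ℝ) + 1) := by positivity
      nlinarith
    · have hm33 : 33 ≤ m := by omega
      have h5 : (5:ℝ) ≤ Real.logb 2 ((m:ℝ) + 1) := by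
        have h32 : Real.logb 2 ((2:ℝ) ^ (5:ℕ)) ≤ Real.logb 2 ((m:ℝ) + 1) := by
          apply Real.logb_le_logb_of_le hb (by positivity)
          have : (33:ℝ) ≤ (m:ℝ) := by exact_mod_cast hm33
          norm_num; linarith
        rwa [Real.logb_pow, Real.logb_self_eq_one hb, mul_one] at h32
      have hmr : (33:ℝ) ≤ (m:ℝ) := by exact_mod_cast hm33
      have hnr : (n:ℝ) ≤ 3 * m + 2 := by exact_mod_cast hn3m
      nlinarith
  -- final arithmetic
  have hmL : ((m * Nat.log 2 m : ℕ) : ℝ) ≤ (m:ℝ) * Real.logb 2 ((m:ℝ) + 1) := by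
    push_cast
    have hm0 : (0:ℝ) ≤ (m:ℝ) := by positivity
    exact mul_le_mul_of_nonneg_left hA hm0
  push_cast at hlog ⊢
  nlinarith
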